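/- If C ⊆ A^n is a code of cardinality m ≥ 3 with encoding bijection λ : M → C, then Iso(C) = Stab_W(η_λ), where Stab_W(η) = {g ∈ S(M) : W(g(η)) = W(η)}. -/

import Mathlib

/-- Partitions of `Fin m` are represented as finsets of finsets. -/
abbrev Ptn (m : ℕ) := Finset (Finset (Fin m))

/-- `α` is a partition of `Fin m`: all classes are nonempty and every element
belongs to exactly one class. -/
def IsPartition {m : ℕ} (α : Ptn m) : Prop :=
  (∀ c ∈ α, c.Nonempty) ∧ ∀ i : Fin m, ∃! c, c ∈ α ∧ i ∈ c

/-- `P`: the set of partitions of `M = Fin m` into at most `q` nonempty classes. -/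
def Pset (m q : ℕ) : Set (Ptn m) :=
  {α | IsPartition α ∧ α.card ≤ q}

/-- `P₂`: the partitions of the form `{{i,j}, M ∖ {i,j}}` for 2-element subsets `{i,j}`. -/
def P2set (m : ℕ) : Set (Ptn m) :=
  {α | ∃ p : Finset (Fin m), p.card = 2 ∧ α = {p, pᶜ}}

/-- `O` as a set: the 2-element subsets of `M = Fin m`. -/
def Oset (m : ℕ) : Set (Finset (Fin m)) := {p | p.card = 2}

/-- `O` as a type: the 2-element subsets of `M = Fin m`. -/
abbrev OO (m : ℕ) := {p : Finset (Fin m) // p.card = 2}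

/-- `P` as a type. -/
abbrev PP (m q : ℕ) := {α : Ptn m // α ∈ Pset m q}

noncomputable instance (m q : ℕ) : Fintype (PP m q) := Fintype.ofFinite _

/-- The canonical action of `S(M)` on partitions: `g({c₁,…,cₜ}) = {g(c₁),…,g(cₜ)}`. -/
def permPart {m : ℕ} (g : Equiv.Perm (Fin m)) (α : Ptn m) : Ptn m :=
  α.image fun c => c.image g

/-- The canonical action of `S(M)` on subsets of `M`. -/
def permPair {m : ℕ} (g : Equiv.Perm (Fin m)) (p : Finset (Fin m)) : Finset (Fin m) :=
  p.image g

/-- `H` is closed under the action `act` on `S` if every `g` that maps each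
`H`-orbit of `S` onto itself belongs to `H`. -/
def ClosedUnder {m : ℕ} {X : Type*} (act : Equiv.Perm (Fin m) → X → X) (S : Set X)
    (H : Set (Equiv.Perm (Fin m))) : Prop :=
  ∀ g : Equiv.Perm (Fin m), (∀ x ∈ S, ∃ h ∈ H, act g x = act h x) → g ∈ H

section Code

variable {m n : ℕ} {A : Type*} [Fintype A] [DecidableEq A]

/-- A map `h : Aⁿ → Aⁿ` is monomial if `h(a) = (σ₁(a_{π(1)}), …, σₙ(a_{π(n)}))`
for a permutation `π ∈ Sₙ` and permutations `σ₁,…,σₙ` of `A`. -/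
def IsMonomial (h : (Fin n → A) → (Fin n → A)) : Prop :=
  ∃ (π : Equiv.Perm (Fin n)) (σ : Fin n → Equiv.Perm A),
    ∀ (a : Fin n → A) (k : Fin n), h a k = σ k (a (π k))

/-- `Iso(C)`: the permutations `g` of the messages such that `λ ∘ g ∘ λ⁻¹` is a
Hamming isometry of the code encoded by `lam`. -/
def IsoSet (lam : Fin m → Fin n → A) : Set (Equiv.Perm (Fin m)) :=
  {g | ∀ i j : Fin m, hammingDist (lam (g i)) (lam (g j)) = hammingDist (lam i) (lam j)}

/-- `Mon(C)`: the elements of `Iso(C)` such that `λ ∘ g ∘ λ⁻¹` extends to a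
monomial map of `Aⁿ`. -/
def MonSet (lam : Fin m → Fin n → A) : Set (Equiv.Perm (Fin m)) :=
  {g | g ∈ IsoSet lam ∧
    ∃ h : (Fin n → A) → (Fin n → A), IsMonomial h ∧ ∀ i : Fin m, h (lam i) = lam (g i)}

/-- `Ψ(x) = {x⁻¹(a) : a ∈ A} ∖ {∅}`, the partition of `M` induced by `x : M → A`. -/
def PsiF (x : Fin m → A) : Ptn m :=
  (Finset.univ.image fun a : A => Finset.univ.filter fun i : Fin m => x i = a).erase ∅

/-- The multiplicity function `η_λ(α) = |{k : Ψ(λ_k) = α}|`. -/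
def eta (lam : Fin m → Fin n → A) (α : Ptn m) : ℚ :=
  (((Finset.univ : Finset (Fin n)).filter fun k => PsiF (fun i => lam i k) = α).card : ℚ)

/-- The multiplicity function, restricted to `P`. -/
def etaP (q : ℕ) (lam : Fin m → Fin n → A) : PP m q → ℚ := fun α => eta lam α.1

end Code

open Classical in
/-- `Δ_α({i,j}) = 0` if `i` and `j` lie in the same class of `α`, and `1` otherwise. -/
noncomputable def Delta {m q : ℕ} (α : PP m q) (p : OO m) : ℚ :=
  if ∃ c ∈ α.1, p.1 ⊆ c then 0 else 1

/-- The linear map `W : F(P,ℚ) → F(O,ℚ)`, `W(η)(p) = Σ_{α∈P} η(α)Δ_α(p)`. -/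
noncomputable def WLin (m q : ℕ) : (PP m q → ℚ) →ₗ[ℚ] (OO m → ℚ) where
  toFun η := fun p => ∑ α : PP m q, η α * Delta α p
  map_add' x y := by
    funext p
    simp [add_mul, Finset.sum_add_distrib]
  map_smul' c x := by
    funext p
    simp [Finset.mul_sum, mul_assoc]

/-- The matrix `B`: `B_{p,t} = 1` if `|p ∩ t| = 1`, and `0` otherwise. -/
def Bmat (m : ℕ) : Matrix (OO m) (OO m) ℚ :=
  Matrix.of fun p t => if (p.1 ∩ t.1).card = 1 then 1 else 0

/-- The matrix `D`: `2(m−2)(m−4)·D_{p,t}` equals `−m²+8m−14` if `p = t`,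
`m−4` if `|p∩t| = 1`, and `−2` if `p ∩ t = ∅`. -/
def Dmat (m : ℕ) : Matrix (OO m) (OO m) ℚ :=
  Matrix.of fun p t =>
    (if p = t then -(m : ℚ) ^ 2 + 8 * m - 14
      else if (p.1 ∩ t.1).card = 1 then (m : ℚ) - 4 else -2) /
      (2 * ((m : ℚ) - 2) * ((m : ℚ) - 4))

/-- `ξ_x = Σ_{r∈O} x(r) Σ_{p∈O} D_{r,p} · id_{{p, M∖p}}`. -/
noncomputable def xi (m q : ℕ) (x : OO m → ℚ) : PP m q → ℚ := fun α =>
  ∑ r : OO m, x r * ∑ p : OO m, Dmat m r p * (if α.1 = ({p.1, p.1ᶜ} : Ptn m) then 1 else 0)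

/-- `ζ_α = id_α − ξ_{Δ_α}`. -/
noncomputable def zeta (m q : ℕ) (α : PP m q) : PP m q → ℚ :=
  (fun β => if β = α then 1 else 0) - xi m q fun p => Delta α p

/-- `V₀`: the functions in `F(P,ℚ)` vanishing on `P ∖ P₂`. -/
def V0 (m q : ℕ) : Set (PP m q → ℚ) :=
  {η | ∀ α : PP m q, (α : Ptn m) ∉ P2set m → η α = 0}

open Classical in
/-- `id_{P₂} = Σ_{α∈P₂} id_α`. -/
noncomputable def idP2 (m q : ℕ) : PP m q → ℚ := fun α =>
  if (α : Ptn m) ∈ P2set m then 1 else 0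

theorem permPart_mem_Pset {m q : ℕ} (g : Equiv.Perm (Fin m)) {α : Ptn m}
    (hα : α ∈ Pset m q) : permPart g α ∈ Pset m q := by
  obtain ⟨⟨hne, huniq⟩, hcard⟩ := hα
  refine ⟨⟨?_, ?_⟩, le_trans Finset.card_image_le hcard⟩
  · intro c hc
    simp only [permPart, Finset.mem_image] at hc
    obtain ⟨d, hd, rfl⟩ := hc
    exact (hne d hd).image g
  · intro i
    obtain ⟨c, ⟨hc, hic⟩, hun⟩ := huniq (g.symm i)
    refine ⟨c.image g, ⟨?_, ?_⟩, ?_⟩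
    · simp only [permPart, Finset.mem_image]
      exact ⟨c, hc, rfl⟩
    · exact Finset.mem_image.2 ⟨g.symm i, hic, g.apply_symm_apply i⟩
    · rintro d ⟨hd, hid⟩
      simp only [permPart, Finset.mem_image] at hd
      obtain ⟨e, he, rfl⟩ := hd
      rw [Finset.mem_image] at hid
      obtain ⟨j, hj, hji⟩ := hid
      have hjs : j = g.symm i := by
        apply g.injective
        rw [hji, g.apply_symm_apply]
      subst hjs
      rw [hun e ⟨he, hj⟩]

/-- The action of `S(M)` on `P`. -/
def permPP {m q : ℕ} (g : Equiv.Perm (Fin m)) (α : PP m q) : PP m q :=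
  ⟨permPart g α.1, permPart_mem_Pset g α.2⟩

/-- The action of `S(M)` on `F(P,ℚ)`: `g(η)(α) = η(g⁻¹(α))`. -/
def permF {m q : ℕ} (g : Equiv.Perm (Fin m)) (η : PP m q → ℚ) : PP m q → ℚ :=
  fun α => η (permPP g⁻¹ α)

/-- `Stab(η) = {g ∈ S(M) : g(η) = η}`. -/
def StabSet {m q : ℕ} (η : PP m q → ℚ) : Set (Equiv.Perm (Fin m)) :=
  {g | permF g η = η}

/-- `Stab_W(η) = {g ∈ S(M) : W(g(η)) = W(η)}`. -/
def StabWSet (m q : ℕ) (η : PP m q → ℚ) : Set (Equiv.Perm (Fin m)) :=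
  {g | WLin m q (permF g η) = WLin m q η}

section AuxProof

variable {m n : ℕ} {A : Type*} [Fintype A] [DecidableEq A]

lemma psiF_mem_Pset (x : Fin m → A) : PsiF x ∈ Pset m (Fintype.card A) := by
  classical
  refine ⟨⟨?_, ?_⟩, ?_⟩
  · intro c hc
    exact Finset.nonempty_iff_ne_empty.2 (Finset.mem_erase.1 hc).1
  · intro i
    refine ⟨Finset.univ.filter fun j => x j = x i, ⟨?_, by simp⟩, ?_⟩
    · refine Finset.mem_erase.2 ⟨?_, Finset.mem_image.2 ⟨x i, Finset.mem_univ _, rfl⟩⟩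
      exact Finset.nonempty_iff_ne_empty.1 ⟨i, by simp⟩
    · rintro c ⟨hc, hic⟩
      rcases Finset.mem_image.1 (Finset.mem_erase.1 hc).2 with ⟨a, _, rfl⟩
      have ha : x i = a := by simpa using (Finset.mem_filter.1 hic).2
      subst ha; rfl
  · exact le_trans (Finset.card_erase_le) (le_trans Finset.card_image_le (by simp))

lemma delta_psiF {q : ℕ} (x : Fin m → A) (hx : PsiF x ∈ Pset m q) (p : OO m)
    {i j : Fin m} (hij : i ≠ j) (hp : p.1 = {i, j}) :
    Delta (⟨PsiF x, hx⟩ : PP m q) p = if x i = x j then 0 else 1 := by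
  classical
  unfold Delta
  by_cases h : x i = x j
  · rw [if_pos h, if_pos]
    refine ⟨Finset.univ.filter fun k => x k = x j, ?_, ?_⟩
    · refine Finset.mem_erase.2 ⟨?_, Finset.mem_image.2 ⟨x j, Finset.mem_univ _, rfl⟩⟩
      exact Finset.nonempty_iff_ne_empty.1 ⟨j, by simp⟩
    · rw [hp]
      simp [Finset.insert_subset_iff, h]
  · rw [if_neg h, if_neg]
    rintro ⟨c, hc, hsub⟩
    rcases Finset.mem_image.1 (Finset.mem_erase.1 hc).2 with ⟨a, _, rfl⟩
    have hi : x i = a := by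
      simpa using Finset.mem_filter.1 (hsub (by rw [hp]; simp))
    have hj : x j = a := by
      simpa using Finset.mem_filter.1 (hsub (by rw [hp]; simp))
    exact h (hi.trans hj.symm)

lemma WLin_etaP (lam : Fin m → Fin n → A) (p : OO m) {i j : Fin m}
    (hij : i ≠ j) (hp : p.1 = {i, j}) :
    WLin m (Fintype.card A) (etaP (Fintype.card A) lam) p
      = (hammingDist (lam i) (lam j) : ℚ) := by
  classical
  have key : ∀ k : Fin n,
      (∑ α : PP m (Fintype.card A),
        (if PsiF (fun i' => lam i' k) = α.1 then (1 : ℚ) else 0) * Delta α p)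
        = if lam i k = lam j k then 0 else 1 := by
    intro k
    rw [Finset.sum_eq_single_of_mem
      (⟨PsiF (fun i' => lam i' k), psiF_mem_Pset _⟩ : PP m (Fintype.card A))
      (Finset.mem_univ _)]
    · rw [if_pos rfl, one_mul, delta_psiF _ _ p hij hp]
    · intro b _ hb
      rw [if_neg, zero_mul]
      intro hbeq
      exact hb (Subtype.ext hbeq.symm)
  have heta : ∀ α : PP m (Fintype.card A), etaP (Fintype.card A) lam α
      = ∑ k : Fin n, if PsiF (fun i' => lam i' k) = α.1 then (1 : ℚ) else 0 := by
    intro α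
    rw [etaP, eta, Finset.card_filter, Nat.cast_sum]
    exact Finset.sum_congr rfl fun k _ => by split <;> simp
  show (∑ α : PP m (Fintype.card A), etaP (Fintype.card A) lam α * Delta α p) = _
  calc (∑ α : PP m (Fintype.card A), etaP (Fintype.card A) lam α * Delta α p)
      = ∑ α : PP m (Fintype.card A), ∑ k : Fin n,
          (if PsiF (fun i' => lam i' k) = α.1 then (1 : ℚ) else 0) * Delta α p := by
        refine Finset.sum_congr rfl fun α _ => ?_
        rw [heta α, Finset.sum_mul]
    _ = ∑ k : Fin n, ∑ α : PP m (Fintype.card A),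
          (if PsiF (fun i' => lam i' k) = α.1 then (1 : ℚ) else 0) * Delta α p :=
        Finset.sum_comm
    _ = ∑ k : Fin n, if lam i k = lam j k then (0 : ℚ) else 1 :=
        Finset.sum_congr rfl fun k _ => key k
    _ = (hammingDist (lam i) (lam j) : ℚ) := by
        rw [hammingDist, Finset.card_filter, Nat.cast_sum]
        refine Finset.sum_congr rfl fun k _ => ?_
        by_cases h : lam i k = lam j k <;> simp [h]

lemma permPart_cancel {m : ℕ} (g : Equiv.Perm (Fin m)) (β : Ptn m) :
    permPart g (permPart g⁻¹ β) = β := by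
  simp only [permPart, Finset.image_image]
  have h1 : ((fun c : Finset (Fin m) => c.image ⇑g) ∘ fun c => c.image ⇑g⁻¹) = id := by
    funext c
    show (c.image ⇑g⁻¹).image ⇑g = c
    ext y
    simp
  rw [h1, Finset.image_id]

lemma psiF_perm (g : Equiv.Perm (Fin m)) (x : Fin m → A) :
    PsiF (fun i => x (g⁻¹ i)) = permPart g (PsiF x) := by
  classical
  have himg : ∀ a : A, (Finset.univ.filter fun i => x i = a).image g
      = Finset.univ.filter fun i => x (g⁻¹ i) = a := by
    intro a
    ext i
    simp only [Finset.mem_image, Finset.mem_filter, Finset.mem_univ, true_and]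
    constructor
    · rintro ⟨j, hj, rfl⟩; simpa using hj
    · intro h; exact ⟨g⁻¹ i, h, by simp⟩
  unfold PsiF permPart
  rw [Finset.image_erase (Finset.image_injective g.injective), Finset.image_empty,
    Finset.image_image]
  congr 1
  exact Finset.image_congr fun a _ => (himg a).symm

set_option maxHeartbeats 1000000 in
lemma permF_etaP (g : Equiv.Perm (Fin m)) (lam : Fin m → Fin n → A) :
    permF g (etaP (Fintype.card A) lam)
      = etaP (Fintype.card A) (fun i => lam (g⁻¹ i)) := by
  classical
  have hcan : ∀ β : Ptn m, permPart g⁻¹ (permPart g β) = β := fun β => by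
    simpa using permPart_cancel g⁻¹ β
  funext α
  simp only [permF, etaP, eta, permPP]
  have hfilt : (Finset.univ.filter fun k : Fin n =>
        PsiF (fun i' => lam i' k) = permPart g⁻¹ α.1)
      = Finset.univ.filter fun k : Fin n => PsiF (fun i => lam (g⁻¹ i) k) = α.1 := by
    refine Finset.filter_congr fun k _ => ?_
    have hpsi : PsiF (fun i => lam (g⁻¹ i) k) = permPart g (PsiF fun i' => lam i' k) :=
      psiF_perm g (fun i' => lam i' k)
    constructor
    · intro h
      rw [hpsi, h]
      exact permPart_cancel g _
    · intro h
      rw [hpsi] at h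
      rw [← h, hcan]
  convert congrArg (fun s : Finset (Fin n) => (s.card : ℚ)) hfilt using 3
  exact Finset.filter_congr fun k _ => Iff.rfl

end AuxProof

/-- `Iso(C) = Stab_W(η_λ)`. -/
theorem iso_eq_stabW {A : Type*} [Fintype A] [DecidableEq A]
    (hq : 2 ≤ Fintype.card A) {m n : ℕ} (hm : 3 ≤ m) (hn : 0 < n)
    (lam : Fin m → Fin n → A) (hlam : Function.Injective lam) :
    IsoSet lam = StabWSet m (Fintype.card A) (etaP (Fintype.card A) lam) := by
  ext g
  simp only [IsoSet, StabWSet, Set.mem_setOf_eq]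
  constructor
  · intro hg
    funext p
    obtain ⟨i, j, hij, hp⟩ := Finset.card_eq_two.1 p.2
    rw [permF_etaP, WLin_etaP (fun i => lam (g⁻¹ i)) p hij hp, WLin_etaP lam p hij hp]
    have := hg (g⁻¹ i) (g⁻¹ j)
    simp only [Equiv.Perm.inv_def, Equiv.apply_symm_apply] at this ⊢
    exact_mod_cast this.symm
  · intro hg i j
    by_cases hij : i = j
    · subst hij; simp
    · have hc : ({g i, g j} : Finset (Fin m)).card = 2 :=
        Finset.card_pair fun h => hij (g.injective h)
      have h1 := congrFun hg (⟨{g i, g j}, hc⟩ : OO m)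
      rw [permF_etaP,
        WLin_etaP (fun i => lam (g⁻¹ i)) _ (fun h => hij (g.injective h)) rfl,
        WLin_etaP lam _ (fun h => hij (g.injective h)) rfl] at h1
      simp only [Equiv.Perm.inv_def, Equiv.symm_apply_apply] at h1
      exact_mod_cast h1.symm
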